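/- Let A be a unital F-algebra of dimension n > 2 possessing a long basis E = {e_0 = 1, e_1, …, e_{n−1}} (meaning e_i^2 = e_{i+1} for i = 1, …, n−2) such that e_p e_q ∈ span{e_0, …, e_{max(p,q)}} for all p ≠ q. Then A has length l(A) = 2^{n−2}. -/

import Mathlib

/-- Words in a generating set `S` of a unital not necessarily associative algebra:
`IsWord S k a` means `a` is (the value of) a word of length `k` in `S`.
The unit is the word of length `0`. -/
inductive IsWord {A : Type*} [NonAssocRing A] (S : Set A) : ℕ → A → Prop
  | one : IsWord S 0 1
  | gen : ∀ a ∈ S, IsWord S 1 a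
  | mul : ∀ {p q : ℕ} {u v : A}, IsWord S p u → IsWord S q v →
      0 < p → 0 < q → IsWord S (p + q) (u * v)

/-- `Lk F S k` is the linear span of all words in `S` of length at most `k`. -/
def Lk (F : Type*) {A : Type*} [Field F] [NonAssocRing A] [Module F A]
    (S : Set A) (k : ℕ) : Submodule F A :=
  Submodule.span F {a : A | ∃ j ≤ k, IsWord S j a}

/-- `S` generates the algebra `A`. -/
def Generates (F : Type*) {A : Type*} [Field F] [NonAssocRing A] [Module F A]
    (S : Set A) : Prop :=
  ∃ k, Lk F S k = ⊤

/-- The length of a generating set. -/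
noncomputable def genLength (F : Type*) {A : Type*} [Field F] [NonAssocRing A] [Module F A]
    (S : Set A) : ℕ :=
  sInf {k | Lk F S k = ⊤}

/-- `HasAlgLength F A l` : the length of the algebra `A` is `l`, i.e. `l` is the maximum
of the lengths of finite generating sets of `A`. -/
def HasAlgLength (F A : Type*) [Field F] [NonAssocRing A] [Module F A]
    [SMulCommClass F A A] [IsScalarTower F A A] (l : ℕ) : Prop :=
  (∃ S : Set A, S.Finite ∧ Generates F S ∧ genLength F S = l) ∧
  ∀ S : Set A, S.Finite → Generates F S → genLength F S ≤ l

section Aux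
set_option linter.unusedSectionVars false
set_option linter.unnecessarySimpa false
set_option linter.unusedVariables false

variable {F A : Type*} [Field F] [NonAssocRing A] [Module F A]
  [SMulCommClass F A A] [IsScalarTower F A A]

lemma isWord_zero' {S : Set A} {j : ℕ} {a : A} (h : IsWord S j a) (hj : j = 0) : a = 1 := by
  cases h with
  | one => rfl
  | gen => omega
  | mul hu hv hp hq => omega

lemma isWord_zero {S : Set A} {a : A} (h : IsWord S 0 a) : a = 1 :=
  isWord_zero' h rfl

lemma lk_mono {S : Set A} {k m : ℕ} (h : k ≤ m) : Lk F S k ≤ Lk F S m :=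
  Submodule.span_mono fun a ⟨j, hj, hw⟩ => ⟨j, hj.trans h, hw⟩

lemma word_mem_lk {S : Set A} {j k : ℕ} {a : A} (h : IsWord S j a) (hjk : j ≤ k) :
    a ∈ Lk F S k := Submodule.subset_span ⟨j, hjk, h⟩

lemma one_mem_lk {S : Set A} (k : ℕ) : (1 : A) ∈ Lk F S k :=
  word_mem_lk IsWord.one k.zero_le

lemma span_mul_span_le {s t : Set A} {P : Submodule F A}
    (h : ∀ x ∈ s, ∀ y ∈ t, x * y ∈ P) :
    ∀ u ∈ Submodule.span F s, ∀ v ∈ Submodule.span F t, u * v ∈ P := by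
  intro u hu
  induction hu using Submodule.span_induction with
  | mem x hx =>
      intro v hv
      induction hv using Submodule.span_induction with
      | mem y hy => exact h x hx y hy
      | zero => simpa using P.zero_mem
      | add y z _ _ hy hz => simpa [mul_add] using P.add_mem hy hz
      | smul c y _ hy => simpa [mul_smul_comm] using P.smul_mem c hy
  | zero => intro v hv; simpa using P.zero_mem
  | add x y _ _ hx hy => intro v hv; simpa [add_mul] using P.add_mem (hx v hv) (hy v hv)
  | smul c x _ hx => intro v hv; simpa [smul_mul_assoc] using P.smul_mem c (hx v hv)

lemma mul_mem_lk {S : Set A} {p q : ℕ} {u v : A} (hu : u ∈ Lk F S p) (hv : v ∈ Lk F S q) :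
    u * v ∈ Lk F S (p + q) := by
  refine span_mul_span_le ?_ u hu v hv
  rintro x ⟨a, hap, hx⟩ y ⟨b, hbq, hy⟩
  rcases Nat.eq_zero_or_pos a with ha0 | ha
  · subst ha0
    rw [isWord_zero hx, one_mul]
    exact word_mem_lk hy (hbq.trans (Nat.le_add_left q p))
  rcases Nat.eq_zero_or_pos b with hb0 | hb
  · subst hb0
    rw [isWord_zero hy, mul_one]
    exact word_mem_lk hx (hap.trans (Nat.le_add_right p q))
  exact word_mem_lk (IsWord.mul hx hy ha hb) (Nat.add_le_add hap hbq)

lemma lk_all_le_of_double {S : Set A} {k : ℕ} (hk : 1 ≤ k)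
    (hd : Lk F S (k + k) ≤ Lk F S k) : ∀ m, Lk F S m ≤ Lk F S k := by
  have key : ∀ j, ∀ a : A, IsWord S j a → a ∈ Lk F S k := by
    intro j
    induction j using Nat.strong_induction_on with
    | _ j IH =>
      intro a hw
      cases hw with
      | one => exact one_mem_lk k
      | gen a ha => exact word_mem_lk (IsWord.gen a ha) hk
      | @mul p q u v hu hv hp hq =>
          exact hd (mul_mem_lk (IH p (by omega) u hu) (IH q (by omega) v hv))
  intro m
  refine Submodule.span_le.2 ?_
  rintro a ⟨j, _, hw⟩
  exact key j a hw

lemma lk_pow_top {S : Set A} [FiniteDimensional F A] (hG : Generates F S)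
    {n : ℕ} (hn : 2 < n) (hrank : Module.finrank F A = n) :
    Lk F S (2 ^ (n - 2)) = ⊤ := by
  obtain ⟨K, hK⟩ := hG
  have hnt : Nontrivial A := by
    rw [← Module.finrank_pos_iff (R := F)]; omega
  have hstep : ∀ k, 1 ≤ k → Lk F S k ≠ ⊤ → Lk F S k < Lk F S (k + k) := by
    intro k hk hne
    refine lt_of_le_of_ne (lk_mono (by omega)) fun heq => hne ?_
    exact top_unique (hK ▸ lk_all_le_of_double hk (le_of_eq heq.symm) K)
  have hbase : 2 ≤ Module.finrank F (Lk F S 1) := by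
    by_contra hlt
    push_neg at hlt
    have h1 : Submodule.span F {(1 : A)} ≤ Lk F S 1 :=
      Submodule.span_le.2 (by simpa using one_mem_lk (S := S) 1)
    have hfr1 : Module.finrank F (Submodule.span F {(1 : A)}) = 1 :=
      finrank_span_singleton one_ne_zero
    have heq : Submodule.span F {(1 : A)} = Lk F S 1 :=
      Submodule.eq_of_le_of_finrank_le h1 (by omega)
    have key : ∀ j, ∀ a : A, IsWord S j a → a ∈ Submodule.span F {(1 : A)} := by
      intro j
      induction j using Nat.strong_induction_on with
      | _ j IH =>
        intro a hw
        cases hw with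
        | one => exact Submodule.mem_span_singleton_self 1
        | gen a ha => rw [heq]; exact word_mem_lk (IsWord.gen a ha) le_rfl
        | @mul p q u v hu hv hp hq =>
          obtain ⟨c, rfl⟩ := Submodule.mem_span_singleton.1 (IH p (by omega) u hu)
          obtain ⟨d, rfl⟩ := Submodule.mem_span_singleton.1 (IH q (by omega) v hv)
          exact Submodule.mem_span_singleton.2
            ⟨c * d, by rw [smul_mul_assoc, one_mul, smul_smul]⟩
    have htop : (⊤ : Submodule F A) ≤ Submodule.span F {(1 : A)} := by
      rw [← hK]
      refine Submodule.span_le.2 ?_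
      rintro a ⟨j, _, hw⟩
      exact key j a hw
    rw [top_unique htop, finrank_top] at hfr1
    omega
  have hgrow : ∀ t, Lk F S (2 ^ t) = ⊤ ∨ t + 2 ≤ Module.finrank F (Lk F S (2 ^ t)) := by
    intro t
    induction t with
    | zero => exact Or.inr (by simpa using hbase)
    | succ t IH =>
      by_cases htop : Lk F S (2 ^ t) = ⊤
      · exact Or.inl (top_unique
          (htop ▸ lk_mono (Nat.pow_le_pow_right (by norm_num) (Nat.le_succ t))))
      · rcases IH with h | h
        · exact absurd h htop
        · right
          have hlt := hstep (2 ^ t) Nat.one_le_two_pow htop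
          have h2 : 2 ^ t + 2 ^ t = 2 ^ (t + 1) := by ring
          rw [h2] at hlt
          have := Submodule.finrank_lt_finrank_of_lt hlt
          omega
  rcases hgrow (n - 2) with h | h
  · exact h
  · apply Submodule.eq_top_of_finrank_eq
    have hle := Submodule.finrank_le (Lk F S (2 ^ (n - 2)))
    omega

end Aux

/-- A unital `F`-algebra of dimension `n > 2` with a long basis
`e 0 = 1, e 1, …, e (n-1)` (i.e. `e i ^ 2 = e (i+1)` for `1 ≤ i ≤ n - 2`) such that
`e p * e q ∈ span {e 0, …, e (max p q)}` for `p ≠ q` has length `2 ^ (n - 2)`. -/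
theorem length_eq_of_long_basis (F A : Type*) [Field F] [NonAssocRing A]
    [Module F A] [SMulCommClass F A A] [IsScalarTower F A A]
    (n : ℕ) (hn : 2 < n) (e : Module.Basis (Fin n) F A)
    (he0 : e ⟨0, by omega⟩ = 1)
    (hsq : ∀ i : Fin n, ∀ (_h1 : 1 ≤ i.val) (_h2 : i.val ≤ n - 2),
      e i * e i = e ⟨i.val + 1, by omega⟩)
    (hspan : ∀ p q : Fin n, p ≠ q →
      e p * e q ∈ Submodule.span F (e '' {j : Fin n | j.val ≤ max p.val q.val})) :
    HasAlgLength F A (2 ^ (n - 2)) := by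
  haveI : FiniteDimensional F A := e.finiteDimensional_of_finite
  have hrank : Module.finrank F A = n := by
    rw [Module.finrank_eq_card_basis e, Fintype.card_fin]
  set S : Set A := {e ⟨1, by omega⟩} with hS
  -- monotonicity of the auxiliary spans
  have Dmono : ∀ k l : ℕ, k ≤ l →
      Submodule.span F (e '' {j : Fin n | j.val = 0 ∨ (1 ≤ j.val ∧ 2 ^ (j.val - 1) ≤ k)}) ≤
      Submodule.span F (e '' {j : Fin n | j.val = 0 ∨ (1 ≤ j.val ∧ 2 ^ (j.val - 1) ≤ l)}) := by
    intro k l hkl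
    refine Submodule.span_mono (Set.image_mono ?_)
    intro j hj
    exact hj.imp id fun h => ⟨h.1, h.2.trans hkl⟩
  -- the basis powers are words
  have hword : ∀ j : ℕ, ∀ _h1 : 1 ≤ j, ∀ h2 : j < n,
      IsWord S (2 ^ (j - 1)) (e ⟨j, h2⟩) := by
    intro j
    induction j with
    | zero => intro h1 _; omega
    | succ j IH =>
      intro h1 h2
      rcases Nat.eq_zero_or_pos j with rfl | hj
      · exact IsWord.gen _ rfl
      · have hj2 : j < n := by omega
        have hsq' := hsq ⟨j, hj2⟩ hj (by show j ≤ n - 2; omega)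
        have hw := IsWord.mul (IH hj hj2) (IH hj hj2)
          (Nat.pow_pos (by norm_num)) (Nat.pow_pos (by norm_num))
        rw [hsq'] at hw
        have hpow : 2 ^ (j - 1) + 2 ^ (j - 1) = 2 ^ (j + 1 - 1) := by
          have h3 : j + 1 - 1 = (j - 1) + 1 := by omega
          rw [h3, pow_succ]
          omega
        rw [hpow] at hw
        exact hw
  -- L_{2^(n-2)} = ⊤ for S
  have htopS : Lk F S (2 ^ (n - 2)) = ⊤ := by
    refine top_unique ?_
    rw [← e.span_eq]
    refine Submodule.span_le.2 ?_
    rintro _ ⟨i, rfl⟩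
    rcases Nat.eq_zero_or_pos i.val with h0 | h1
    · have hi : i = ⟨0, by omega⟩ := Fin.ext h0
      rw [hi, he0]
      exact one_mem_lk _
    · have h2 : i.val < n := i.isLt
      have hw := hword i.val h1 h2
      have hieq : (⟨i.val, h2⟩ : Fin n) = i := rfl
      rw [hieq] at hw
      exact word_mem_lk hw (Nat.pow_le_pow_right (by norm_num) (by omega))
  -- degree bound for short words
  have hD : ∀ m : ℕ, m < 2 ^ (n - 2) → ∀ a : A, IsWord S m a →
      a ∈ Submodule.span F
        (e '' {j : Fin n | j.val = 0 ∨ (1 ≤ j.val ∧ 2 ^ (j.val - 1) ≤ m)}) := by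
    intro m
    induction m using Nat.strong_induction_on with
    | _ m IH =>
      intro hm a hw
      cases hw with
      | one => exact Submodule.subset_span ⟨⟨0, by omega⟩, Or.inl rfl, he0⟩
      | gen a ha =>
        rw [hS, Set.mem_singleton_iff] at ha
        subst ha
        exact Submodule.subset_span ⟨⟨1, by omega⟩, Or.inr ⟨le_rfl, by norm_num⟩, rfl⟩
      | @mul p q u v hu hv hp hq =>
        have hup := IH p (by omega) (by omega) u hu
        have hvq := IH q (by omega) (by omega) v hv
        refine span_mul_span_le ?_ u hup v hvq
        rintro _ ⟨i, hi, rfl⟩ _ ⟨j, hj, rfl⟩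
        rcases hi with hi0 | ⟨hi1, hip⟩
        · have hie : i = ⟨0, by omega⟩ := Fin.ext hi0
          rw [hie, he0, one_mul]
          exact Dmono q (p + q) (by omega) (Submodule.subset_span ⟨j, hj, rfl⟩)
        rcases hj with hj0 | ⟨hj1, hjq⟩
        · have hje : j = ⟨0, by omega⟩ := Fin.ext hj0
          rw [hje, he0, mul_one]
          exact Dmono p (p + q) (by omega)
            (Submodule.subset_span ⟨i, Or.inr ⟨hi1, hip⟩, rfl⟩)
        by_cases hij : i = j
        · subst hij
          have hilt : i.val - 1 < n - 2 := by
            have hplt : 2 ^ (i.val - 1) < 2 ^ (n - 2) := by omega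
            exact (Nat.pow_lt_pow_iff_right (by norm_num)).1 hplt
          have hin : i.val + 1 < n := by
            have h5 := hilt
            have h6 := hi1
            clear hip hjq hm
            omega
          rw [hsq i hi1 (by omega)]
          refine Submodule.subset_span ⟨⟨i.val + 1, hin⟩, Or.inr ⟨Nat.le_add_left 1 i.val, ?_⟩, rfl⟩
          have h4 : i.val + 1 - 1 = (i.val - 1) + 1 := by omega
          rw [h4, pow_succ]
          omega
        · refine Submodule.span_le.2 ?_ (hspan i j hij)
          rintro _ ⟨l, hl, rfl⟩
          have hl' : l.val ≤ max i.val j.val := hl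
          refine Submodule.subset_span ⟨l, ?_, rfl⟩
          rcases Nat.eq_zero_or_pos l.val with h0 | h1
          · exact Or.inl h0
          · refine Or.inr ⟨h1, ?_⟩
            have hmax : 2 ^ (max i.val j.val - 1) ≤ p + q := by
              rcases max_cases i.val j.val with ⟨hm1, _⟩ | ⟨hm1, _⟩
              · rw [hm1]; exact hip.trans (by omega)
              · rw [hm1]; exact hjq.trans (by omega)
            exact le_trans (Nat.pow_le_pow_right (by norm_num) (by omega)) hmax
  -- short spans are proper
  have hne : ∀ k : ℕ, k < 2 ^ (n - 2) → Lk F S k ≠ ⊤ := by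
    intro k hk htop
    have hmem : e ⟨n - 1, by omega⟩ ∈ Lk F S k := htop ▸ Submodule.mem_top
    have hsub : Lk F S k ≤ Submodule.span F
        (e '' {j : Fin n | j.val = 0 ∨ (1 ≤ j.val ∧ 2 ^ (j.val - 1) ≤ k)}) := by
      refine Submodule.span_le.2 ?_
      rintro a ⟨m, hmk, hw⟩
      exact Dmono m k hmk (hD m (lt_of_le_of_lt hmk hk) a hw)
    refine e.linearIndependent.notMem_span_image
      (s := {j : Fin n | j.val = 0 ∨ (1 ≤ j.val ∧ 2 ^ (j.val - 1) ≤ k)})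
      (x := ⟨n - 1, by omega⟩) ?_ (hsub hmem)
    rintro (h0 | ⟨h1, h2⟩)
    · simp only [] at h0; omega
    · have : (2 : ℕ) ^ (n - 1 - 1) ≤ k := h2
      have hnn : n - 1 - 1 = n - 2 := by omega
      rw [hnn] at this
      omega
  constructor
  · refine ⟨S, Set.finite_singleton _, ⟨_, htopS⟩, ?_⟩
    refine le_antisymm (Nat.sInf_le htopS) (le_csInf ⟨_, htopS⟩ ?_)
    intro b hb
    by_contra hlt
    push_neg at hlt
    exact hne b hlt hb
  · intro T _ hTgen
    exact Nat.sInf_le (lk_pow_top hTgen hn hrank)
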